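/- Let k ≥ 1 be an integer and let f ∈ L^{p,∞}[0,∞). Then sup_{n≥0} 2^{n/q} · ||| ( ∫_{(j-1)/2^n}^{j/2^n} f )_{j=1}^{k·2^n} ||| ≤ ‖f‖, where for the finite sequence a = (a_j)_{j=1}^{k·2^n} one sets |||a||| = max_{1≤j≤k·2^n} j^{1/p} a*_j with (a*_j) the decreasing rearrangement of (|a_j|). -/

import Mathlib

open MeasureTheory Set ENNReal

noncomputable def wnorm {α : Type*} [MeasurableSpace α] (q : ℝ) (μ : Measure α)
    (f : α → ℝ) : ℝ≥0∞ :=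
  ⨆ (B : Set α) (_ : MeasurableSet B ∧ 0 < μ B ∧ μ B < ⊤),
    (∫⁻ x in B, ENNReal.ofReal |f x| ∂μ) / μ B ^ (1 / q)

def SigmaFinSupp {α : Type*} [MeasurableSpace α] (μ : Measure α) (f : α → ℝ) : Prop :=
  ∃ s : ℕ → Set α, {x | f x ≠ 0} ⊆ (⋃ n, s n) ∧ ∀ n, μ (s n) < ⊤

def MemW {α : Type*} [MeasurableSpace α] (q : ℝ) (μ : Measure α) (f : α → ℝ) : Prop :=
  Measurable f ∧ SigmaFinSupp μ f ∧ wnorm q μ f < ⊤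

/-- The integral of `f` over the dyadic interval `[j/2^n, (j+1)/2^n]`
(0-indexed; this is the paper's `∫_{(j-1)/2^n}^{j/2^n} f` for the 1-indexed `j`). -/
noncomputable def dyadicInt (f : ℝ → ℝ) (n j : ℕ) : ℝ :=
  ∫ t in ((j : ℝ) / 2 ^ n)..(((j : ℝ) + 1) / 2 ^ n), f t

set_option maxHeartbeats 1000000 in
/-- Lemma 1 of the paper: for `f ∈ L^{p,∞}[0,∞)` and every `n`,
`2^{n/q} ||| (∫_{(j-1)/2^n}^{j/2^n} f)_{j=1}^{k·2^n} ||| ≤ ‖f‖`, where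
`|||a||| = max_j j^{1/p} a*_j` is expressed through any permutation `σ` arranging the
`|a_j|` in decreasing order. -/
theorem dyadic_averages_bound (p q : ℝ) (hp : 1 < p) (hq : q = p / (p - 1))
    (k : ℕ) (hk : 1 ≤ k) (f : ℝ → ℝ) (hf : MemW q (volume.restrict (Ici (0:ℝ))) f)
    (n : ℕ) (σ : Equiv.Perm (Fin (k * 2 ^ n)))
    (hσ : Antitone fun j : Fin (k * 2 ^ n) => |dyadicInt f n (σ j)|) :
    ENNReal.ofReal ((2:ℝ) ^ ((n : ℝ) / q)) *
      (⨆ j : Fin (k * 2 ^ n),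
        ENNReal.ofReal (((j : ℕ) + 1 : ℝ) ^ (1 / p) * |dyadicInt f n (σ j)|)) ≤
    wnorm q (volume.restrict (Ici (0:ℝ))) f := by
  set μ := volume.restrict (Ici (0:ℝ)) with hμ
  have hp0 : (0:ℝ) < p := lt_trans one_pos hp
  have hp1 : (0:ℝ) < p - 1 := sub_pos.mpr hp
  have hq0 : (0:ℝ) < q := by rw [hq]; positivity
  have hpq : 1 / p + 1 / q = 1 := by
    rw [hq]; field_simp; ring
  have hc : (0:ℝ) < 2 ^ n := by positivity
  set I : ℕ → Set ℝ := fun m => Ioc ((m:ℝ)/2^n) (((m:ℝ)+1)/2^n) with hI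
  have hIm : ∀ m, MeasurableSet (I m) := fun m => measurableSet_Ioc
  have hIsub : ∀ m, I m ⊆ Ici (0:ℝ) := by
    intro m x hx
    have : (0:ℝ) ≤ (m:ℝ)/2^n := by positivity
    exact le_of_lt (lt_of_le_of_lt this hx.1)
  have hμI : ∀ m, μ (I m) = ENNReal.ofReal (1 / 2 ^ n) := by
    intro m
    rw [hμ, Measure.restrict_apply (hIm m), inter_eq_left.mpr (hIsub m)]
    simp only [hI, Real.volume_Ioc]
    congr 1; ring
  have hdisj : ∀ a b : ℕ, a ≠ b → Disjoint (I a) (I b) := by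
    intro a b hab
    simp only [hI]
    rw [Set.Ioc_disjoint_Ioc]
    rcases hab.lt_or_gt with h | h
    · have hle : ((a:ℝ)+1)/2^n ≤ (b:ℝ)/2^n := by
        gcongr
        exact_mod_cast Nat.succ_le_of_lt h
      exact le_trans inf_le_left (le_trans hle le_sup_right)
    · have hle : ((b:ℝ)+1)/2^n ≤ (a:ℝ)/2^n := by
        gcongr
        exact_mod_cast Nat.succ_le_of_lt h
      exact le_trans inf_le_right (le_trans hle le_sup_left)
  have hint : ∀ m : ℕ, ENNReal.ofReal |dyadicInt f n m| ≤
      ∫⁻ t in I m, ENNReal.ofReal |f t| ∂μ := by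
    intro m
    have hle : (m:ℝ)/2^n ≤ ((m:ℝ)+1)/2^n := by gcongr; linarith
    have h1 : ∫⁻ t in I m, ENNReal.ofReal |f t| ∂μ
        = ∫⁻ t in I m, ENNReal.ofReal |f t| ∂volume := by
      rw [hμ, Measure.restrict_restrict (hIm m), inter_eq_left.mpr (hIsub m)]
    rw [h1, dyadicInt, intervalIntegral.integral_of_le hle, ← Real.enorm_eq_ofReal_abs]
    calc ‖∫ t in I m, f t‖ₑ
        ≤ ∫⁻ t in I m, ‖f t‖ₑ := enorm_integral_le_lintegral_enorm _
      _ = _ := by simp_rw [Real.enorm_eq_ofReal_abs]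
  rw [ENNReal.mul_iSup]
  refine iSup_le fun j => ?_
  set a : ℝ := |dyadicInt f n (σ j)| with ha
  have ha0 : 0 ≤ a := abs_nonneg _
  set jr : ℝ := ((j:ℕ) : ℝ) + 1 with hjr
  have hjr0 : (0:ℝ) < jr := by positivity
  set T : Finset (Fin (k * 2 ^ n)) := Finset.Iic j with hT
  set S : Finset ℕ := T.image (fun i => ((σ i : ℕ))) with hS
  have hinj : Set.InjOn (fun i : Fin (k * 2 ^ n) => ((σ i : ℕ))) T := by
    intro x _ y _ hxy
    exact σ.injective (Fin.val_injective hxy)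
  have hcardS : S.card = (j:ℕ) + 1 := by
    rw [hS, Finset.card_image_of_injOn hinj, hT, Fin.card_Iic]
  set B : Set ℝ := ⋃ m ∈ S, I m with hB
  have hBm : MeasurableSet B := S.measurableSet_biUnion (fun m _ => hIm m)
  have hdS : (↑S : Set ℕ).PairwiseDisjoint I := fun x _ y _ hxy => hdisj x y hxy
  have hμB : μ B = ENNReal.ofReal (jr / 2 ^ n) := by
    rw [hB, measure_biUnion_finset hdS (fun m _ => hIm m)]
    simp_rw [hμI]
    rw [Finset.sum_const, hcardS, nsmul_eq_mul, ← ENNReal.ofReal_natCast,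
      ← ENNReal.ofReal_mul (by positivity)]
    congr 1
    rw [hjr]; push_cast; ring
  have hpos : 0 < μ B := by
    rw [hμB]; exact ENNReal.ofReal_pos.mpr (by positivity)
  have hlt : μ B < ⊤ := by rw [hμB]; exact ENNReal.ofReal_lt_top
  have hsum : ENNReal.ofReal (jr * a) ≤ ∫⁻ x in B, ENNReal.ofReal |f x| ∂μ := by
    rw [hB, lintegral_biUnion_finset hdS (fun m _ => hIm m)]
    calc ENNReal.ofReal (jr * a)
        = ∑ _i ∈ T, ENNReal.ofReal a := by
          rw [Finset.sum_const, hT, Fin.card_Iic, nsmul_eq_mul, ← ENNReal.ofReal_natCast,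
            ← ENNReal.ofReal_mul (by positivity)]
          congr 1
          rw [hjr]; push_cast; ring
      _ ≤ ∑ i ∈ T, ENNReal.ofReal |dyadicInt f n (σ i)| := by
          refine Finset.sum_le_sum fun i hi => ENNReal.ofReal_le_ofReal ?_
          rw [ha]
          exact hσ (Finset.mem_Iic.mp hi)
      _ = ∑ m ∈ S, ENNReal.ofReal |dyadicInt f n m| := by
          rw [hS, Finset.sum_image hinj]
      _ ≤ ∑ m ∈ S, ∫⁻ t in I m, ENNReal.ofReal |f t| ∂μ :=
          Finset.sum_le_sum fun m _ => hint m
  have hwn : (∫⁻ x in B, ENNReal.ofReal |f x| ∂μ) / μ B ^ (1/q) ≤ wnorm q μ f := by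
    unfold wnorm
    exact le_iSup_of_le B (le_iSup_of_le ⟨hBm, hpos, hlt⟩ le_rfl)
  refine le_trans ?_ hwn
  have hμBr : μ B ^ (1/q) = ENNReal.ofReal ((jr / 2 ^ n) ^ (1/q)) := by
    rw [hμB, ENNReal.ofReal_rpow_of_pos (by positivity)]
  have hbne : μ B ^ (1/q) ≠ 0 := by
    rw [hμBr]
    exact ne_of_gt (ENNReal.ofReal_pos.mpr (by positivity))
  have hbnt : μ B ^ (1/q) ≠ ⊤ := by rw [hμBr]; exact ENNReal.ofReal_ne_top
  rw [ENNReal.le_div_iff_mul_le (Or.inl hbne) (Or.inl hbnt)]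
  have key : (2:ℝ) ^ ((n:ℝ)/q) * (jr ^ (1/p) * a) * ((jr / 2 ^ n) ^ (1/q)) = jr * a := by
    have h2 : (2:ℝ) ^ ((n:ℝ)/q) = ((2:ℝ)^n) ^ (1/q) := by
      rw [← Real.rpow_natCast 2 n, ← Real.rpow_mul (by norm_num)]
      congr 1; ring
    have hdiv : (jr / 2 ^ n) ^ (1/q) = jr ^ (1/q) / ((2:ℝ)^n) ^ (1/q) :=
      Real.div_rpow hjr0.le hc.le _
    have hBD : jr ^ (1/p) * jr ^ (1/q) = jr := by
      rw [← Real.rpow_add hjr0, hpq, Real.rpow_one]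
    have hA : ((2:ℝ)^n) ^ (1/q) ≠ 0 := by positivity
    rw [h2, hdiv]
    field_simp
    linear_combination a * hBD
  calc ENNReal.ofReal ((2:ℝ) ^ ((n:ℝ)/q)) *
        ENNReal.ofReal (jr ^ (1/p) * a) * μ B ^ (1/q)
      = ENNReal.ofReal ((2:ℝ) ^ ((n:ℝ)/q) * (jr ^ (1/p) * a) * ((jr / 2 ^ n) ^ (1/q))) := by
        rw [hμBr, ← ENNReal.ofReal_mul (by positivity), ← ENNReal.ofReal_mul (by positivity)]
    _ = ENNReal.ofReal (jr * a) := by rw [key]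
    _ ≤ _ := hsum
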